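/- Let a, b be real numbers and, for real t > 0, let f(t) = t^{2+iπ/2} + (1 + (π/4)i)·( t^{1+iπ/2} + (a + b(π/4)i)·t^{iπ/2} ). Then there exist t₀ > 0 and a continuous function θ : [t₀, ∞) → ℝ with f(t) = |f(t)|·e^{iθ(t)} for all t ≥ t₀, such that θ(t) = (π/2)·log t + π/(4t) + π(a + b − 1)/(4t²) + O(1/t³) as t → ∞. -/

import Mathlib

open Real

/-- `f(t) = t^{2+iπ/2} + (1 + (π/4)i)·(t^{1+iπ/2} + (a + b(π/4)i)·t^{iπ/2})`. -/
noncomputable def f (a b t : ℝ) : ℂ :=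
  (t : ℂ) ^ (2 + Complex.I * (π : ℂ)/2)
    + (1 + (π : ℂ)/4 * Complex.I) *
        ((t : ℂ) ^ (1 + Complex.I * (π : ℂ)/2)
          + ((a : ℂ) + (b : ℂ) * (π : ℂ)/4 * Complex.I) * (t : ℂ) ^ (Complex.I * (π : ℂ)/2))

/-- Real polynomial factor appearing in `f`. -/
noncomputable def gfun (c s t : ℝ) : ℂ :=
  ((t^2 + t + c : ℝ) : ℂ) + ((π/4*(t+s) : ℝ) : ℂ) * Complex.I

/-- Argument candidate. -/
noncomputable def thetaAux (c s t : ℝ) : ℝ :=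
  (π/2) * Real.log t + Complex.arg (gfun c s t)

lemma aux_sub_arctan_nonneg {x : ℝ} (hx : 0 ≤ x) : 0 ≤ x - Real.arctan x := by
  have h : Monotone (fun x : ℝ => x - Real.arctan x) := by
    apply monotone_of_deriv_nonneg
    · exact differentiable_id.sub Real.differentiable_arctan
    · intro y
      have hd : HasDerivAt (fun x : ℝ => x - Real.arctan x) (1 - 1/(1+y^2)) y :=
        (hasDerivAt_id y).sub (Real.hasDerivAt_arctan y)
      rw [hd.deriv]
      have h1 : (0:ℝ) < 1 + y^2 := by positivity
      rw [sub_nonneg, div_le_one h1]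
      nlinarith [sq_nonneg y]
  simpa using h hx

lemma aux_sub_arctan_le {x : ℝ} (hx : 0 ≤ x) : x - Real.arctan x ≤ x^3 := by
  have h : Monotone (fun x : ℝ => Real.arctan x - x + x^3) := by
    apply monotone_of_deriv_nonneg
    · exact (Real.differentiable_arctan.sub differentiable_id).add (differentiable_pow 3)
    · intro y
      have hd : HasDerivAt (fun x : ℝ => Real.arctan x - x + x^3)
          (1/(1+y^2) - 1 + 3*y^2) y := by
        have h3 : HasDerivAt (fun x : ℝ => x^3) ((3:ℕ) * y^((3:ℕ)-1)) y := hasDerivAt_pow 3 y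
        have := ((Real.hasDerivAt_arctan y).sub (hasDerivAt_id y)).add h3
        refine this.congr_deriv ?_
        norm_num
      rw [hd.deriv]
      have h1 : (0:ℝ) < 1 + y^2 := by positivity
      have h2 : 1 - y^2 ≤ 1/(1+y^2) := by
        rw [le_div_iff₀ h1]; nlinarith [sq_nonneg y, sq_nonneg (y^2)]
      nlinarith [sq_nonneg y]
  have := h hx
  simp only [Real.arctan_zero] at this
  nlinarith [this]

lemma aux_abs_arctan_sub {x : ℝ} (hx : 0 ≤ x) : |Real.arctan x - x| ≤ x^3 := by
  have h1 := aux_sub_arctan_nonneg hx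
  have h2 := aux_sub_arctan_le hx
  have h3 : (0:ℝ) ≤ x^3 := by positivity
  rw [abs_le]
  constructor <;> linarith

lemma aux_arg_eq_arctan {z : ℂ} (hz : 0 < z.re) :
    Complex.arg z = Real.arctan (z.im / z.re) := by
  have h := Complex.abs_arg_lt_pi_div_two_iff.2 (Or.inl hz)
  rw [abs_lt] at h
  rw [← Complex.tan_arg, Real.arctan_tan h.1 h.2]

lemma f_factor (a b t : ℝ) (ht : 0 < t) :
    f a b t = Complex.exp (Complex.I * (((π/2) * Real.log t : ℝ) : ℂ))
      * gfun (a - b*π^2/16) (a + b) t := by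
  have htc : (t:ℂ) ≠ 0 := Complex.ofReal_ne_zero.2 ht.ne'
  set E := Complex.exp (Complex.I * (((π/2) * Real.log t : ℝ) : ℂ)) with hEdef
  have hlog : Complex.log (t:ℂ) = ((Real.log t : ℝ) : ℂ) := (Complex.ofReal_log ht.le).symm
  have h0 : (t:ℂ) ^ (Complex.I * (π:ℂ)/2) = E := by
    rw [Complex.cpow_def_of_ne_zero htc, hlog, hEdef]
    congr 1
    push_cast
    ring
  have h2 : (t:ℂ) ^ (2 + Complex.I * (π:ℂ)/2) = (t:ℂ)^(2:ℕ) * E := by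
    rw [Complex.cpow_add _ _ htc, h0, show ((2:ℂ)) = ((2:ℕ):ℂ) by norm_num,
      Complex.cpow_natCast]
  have h1 : (t:ℂ) ^ (1 + Complex.I * (π:ℂ)/2) = (t:ℂ) * E := by
    rw [Complex.cpow_add _ _ htc, h0, Complex.cpow_one]
  rw [f, gfun, h2, h1, h0]
  push_cast
  linear_combination (E * ((b:ℂ)*(π:ℂ)^2/16)) * Complex.I_sq

set_option maxHeartbeats 1000000 in
/-- There is a continuous argument function `θ` of `f` on some `[t₀, ∞)` with
`θ(t) = (π/2)·log t + π/(4t) + π(a + b − 1)/(4t²) + O(1/t³)` as `t → ∞`. -/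
theorem arg_f_asymptotics (a b : ℝ) :
    ∃ t₀ > (0 : ℝ), ∃ θ : ℝ → ℝ, ContinuousOn θ (Set.Ici t₀) ∧
      (∀ t : ℝ, t ≥ t₀ → f a b t = (‖f a b t‖ : ℂ) * Complex.exp (Complex.I * (θ t : ℂ))) ∧
      ∃ A > (0 : ℝ), ∃ t₁ : ℝ, ∀ t : ℝ, t ≥ t₁ →
        |θ t - ((π/2) * Real.log t + π/(4*t) + π*(a + b - 1)/(4*t^2))| ≤ A / t^3 := by
  set c := a - b*π^2/16 with hc
  set s := a + b with hs
  set t₀ := max 1 (max (|c|+1) (|s|+1)) with ht₀def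
  have ht₀pos : (0:ℝ) < t₀ := lt_of_lt_of_le one_pos (le_max_left _ _)
  -- basic estimates valid for t ≥ t₀
  have hbasic : ∀ t : ℝ, t₀ ≤ t → 1 ≤ t ∧ t^2 ≤ t^2 + t + c ∧ 0 ≤ π/4*(t+s) ∧
      π/4*(t+s) ≤ π*t := by
    intro t ht
    have h1 : 1 ≤ t := le_trans (le_max_left _ _) ht
    have h2 : |c| + 1 ≤ t := le_trans (le_trans (le_max_left _ _) (le_max_right _ _)) ht
    have h3 : |s| + 1 ≤ t := le_trans (le_trans (le_max_right _ _) (le_max_right _ _)) ht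
    have hcabs := abs_le.1 (le_refl |c|)
    have hsabs := abs_le.1 (le_refl |s|)
    refine ⟨h1, by nlinarith, by nlinarith [Real.pi_pos], by nlinarith [Real.pi_pos]⟩
  have hgre : ∀ t : ℝ, (gfun c s t).re = t^2 + t + c := by
    intro t
    simp only [gfun, Complex.add_re, Complex.ofReal_re, Complex.mul_re, Complex.I_re,
      Complex.I_im, Complex.ofReal_im, mul_zero, zero_mul, mul_one, sub_zero, add_zero]
  have hgim : ∀ t : ℝ, (gfun c s t).im = π/4*(t+s) := by
    intro t
    simp only [gfun, Complex.add_im, Complex.ofReal_im, Complex.mul_im, Complex.I_re,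
      Complex.I_im, Complex.ofReal_re, mul_zero, zero_mul, mul_one, zero_add, add_zero]
  have hupos : ∀ t : ℝ, t₀ ≤ t → 0 < t^2 + t + c := by
    intro t ht
    obtain ⟨h1, h2, _, _⟩ := hbasic t ht
    nlinarith
  refine ⟨t₀, ht₀pos, thetaAux c s, ?_, ?_, ?_⟩
  · -- continuity
    intro t ht
    have htpos : 0 < t := lt_of_lt_of_le ht₀pos ht
    apply ContinuousAt.continuousWithinAt
    unfold thetaAux
    apply ContinuousAt.add
    · exact continuousAt_const.mul (Real.continuousAt_log htpos.ne')
    · have hslit : gfun c s t ∈ Complex.slitPlane := by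
        rw [Complex.mem_slitPlane_iff]
        left
        rw [hgre]
        exact hupos t ht
      have hcont : ContinuousAt (fun x => gfun c s x) t := by
        apply Continuous.continuousAt
        unfold gfun
        have hr1 : Continuous (fun x : ℝ => x^2 + x + c) := by fun_prop
        have hr2 : Continuous (fun x : ℝ => π/4*(x+s)) := by fun_prop
        exact (Complex.continuous_ofReal.comp hr1).add
          ((Complex.continuous_ofReal.comp hr2).mul continuous_const)
      exact (Complex.continuousAt_arg hslit).comp hcont
  · -- polar representation
    intro t ht
    have htpos : 0 < t := lt_of_lt_of_le ht₀pos ht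
    have hg := f_factor a b t htpos
    rw [← hc, ← hs] at hg
    set G := gfun c s t with hG
    set E := Complex.exp (Complex.I * (((π/2) * Real.log t : ℝ) : ℂ)) with hEdef
    have hE1 : ‖E‖ = 1 := by
      rw [hEdef, Complex.norm_exp]
      simp
    have hfn : ‖f a b t‖ = ‖G‖ := by
      rw [hg, norm_mul, hE1, one_mul]
    have hexp : Complex.exp (Complex.I * ((thetaAux c s t : ℝ) : ℂ))
        = E * Complex.exp ((Complex.arg G : ℂ) * Complex.I) := by
      rw [hEdef, ← Complex.exp_add]
      congr 1
      unfold thetaAux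
      rw [← hG]
      push_cast
      ring
    have habs := Complex.norm_mul_exp_arg_mul_I G
    rw [hfn, hg, hexp]
    calc E * G = E * ((‖G‖ : ℂ) * Complex.exp ((Complex.arg G : ℂ) * Complex.I)) := by
          rw [habs]
      _ = (‖G‖ : ℂ) * (E * Complex.exp ((Complex.arg G : ℂ) * Complex.I)) := by ring
  · -- asymptotics
    set K := |c + s - 1| + |(s - 1) * c| with hK
    have hKnn : 0 ≤ K := by positivity
    refine ⟨π^3 + π*K + 1, by positivity, t₀, ?_⟩
    intro t ht
    obtain ⟨h1t, hu_ge, hv_nn, hv_le⟩ := hbasic t ht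
    have htpos : 0 < t := lt_of_lt_of_le ht₀pos ht
    have hup : 0 < t^2 + t + c := hupos t ht
    set u := t^2 + t + c with hu
    set v := π/4*(t+s) with hv
    have harg : Complex.arg (gfun c s t) = Real.arctan (v / u) := by
      rw [aux_arg_eq_arctan (by rw [hgre]; exact hup), hgre, hgim]
    set x := v / u with hx
    set p := π/(4*t) + π*(s-1)/(4*t^2) with hp
    have key : thetaAux c s t - ((π/2) * Real.log t + π/(4*t) + π*(s - 1)/(4*t^2))
        = (Real.arctan x - x) + (x - p) := by
      unfold thetaAux
      rw [harg, hp]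
      ring
    have hx_nonneg : 0 ≤ x := div_nonneg hv_nn hup.le
    have hxle : x ≤ π/t := by
      have h2 : x ≤ (π*t)/(t^2) := by
        rw [hx]
        apply div_le_div₀ (by positivity) hv_le (by positivity) hu_ge
      have h3 : (π*t)/(t^2) = π/t := by
        field_simp
      linarith
    have hx3 : x^3 ≤ π^3/t^3 := by
      calc x^3 ≤ (π/t)^3 := pow_le_pow_left₀ hx_nonneg hxle 3
        _ = π^3/t^3 := div_pow π t 3
    have h_arctan : |Real.arctan x - x| ≤ π^3/t^3 :=
      (aux_abs_arctan_sub hx_nonneg).trans hx3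
    have hexpr : x - p = (π/4) * (-((c+s-1)*t + (s-1)*c)) / (u * t^2) := by
      rw [hx, hp, hv, hu]
      have hu0 : t^2 + t + c ≠ 0 := hup.ne'
      have ht0 : t ≠ 0 := htpos.ne'
      rw [div_add_div _ _ (by positivity) (by positivity), div_sub_div _ _ hu0 (by positivity),
        div_eq_div_iff (mul_ne_zero hu0 (by positivity)) (mul_ne_zero hu0 (by positivity))]
      ring
    have hN : |(-((c+s-1)*t + (s-1)*c))| ≤ K*t := by
      rw [abs_neg]
      calc |(c+s-1)*t + (s-1)*c| ≤ |(c+s-1)*t| + |(s-1)*c| := abs_add_le _ _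
        _ = |c + s - 1| * t + |(s-1)*c| := by rw [abs_mul, abs_of_pos htpos]
        _ ≤ |c + s - 1| * t + |(s-1)*c| * t := by nlinarith [abs_nonneg ((s-1)*c)]
        _ = K*t := by rw [hK]; ring
    have h_second : |x - p| ≤ π*K/t^3 := by
      rw [hexpr, abs_div, abs_mul]
      have hd : |u * t^2| = u * t^2 := abs_of_pos (by positivity)
      have hq : |(π/4 : ℝ)| = π/4 := abs_of_pos (by positivity)
      rw [hd, hq]
      calc π/4 * |(-((c+s-1)*t + (s-1)*c))| / (u * t^2)
          ≤ π/4 * (K*t) / (t^2 * t^2) := by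
            apply div_le_div₀ (by positivity)
              (mul_le_mul_of_nonneg_left hN (by positivity)) (by positivity)
              (mul_le_mul_of_nonneg_right hu_ge (by positivity))
        _ = (π*K/4)/t^3 := by field_simp
        _ ≤ π*K/t^3 := by
            rw [div_le_div_iff_of_pos_right (by positivity : (0:ℝ) < t^3)]
            nlinarith [Real.pi_pos]
    calc |thetaAux c s t - ((π/2) * Real.log t + π/(4*t) + π*(s - 1)/(4*t^2))|
        = |(Real.arctan x - x) + (x - p)| := by rw [key]
      _ ≤ |Real.arctan x - x| + |x - p| := abs_add_le _ _
      _ ≤ π^3/t^3 + π*K/t^3 := add_le_add h_arctan h_second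
      _ ≤ (π^3 + π*K + 1)/t^3 := by
          rw [← add_div, div_le_div_iff_of_pos_right (by positivity : (0:ℝ) < t^3)]
          linarith
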